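/- Let f₀, g_i (i=1,…,m), h_j (j=1,…,p) be convex polynomials on ℝ^n with feasible set F = {x : g_i(x) ≤ 0 ∀i, h_j(x) ≤ 0 ∀j} nonempty, and let f* = inf_F f₀ be finite. Suppose f₀(x) − f* + ε ≤ 0 together with g_i(x) ≤ δ_k ∀i and h_j(x) ≤ δ_k ∀j has solutions x_k for a sequence δ_k → 0⁺. Then there exists x* with f₀(x*) − f* + ε ≤ 0, g_i(x*) ≤ 0 ∀i, h_j(x*) ≤ 0 ∀j — a contradiction when ε > 0. Consequently, for every ε > 0 there exists δ > 0 such that f₀(x) − f* + ε > 0 for all x in the enlarged set {x : g_i(x) ≤ δ ∀i, h_j(x) ≤ δ ∀j}. -/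
import Mathlib
open Filter Topology MvPolynomial

lemma FW.exists_line_poly {n : ℕ} (Q : MvPolynomial (Fin n) ℝ) (x d : Fin n → ℝ) :
    ∃ p : Polynomial ℝ, ∀ t : ℝ, p.eval t = MvPolynomial.eval (x + t • d) Q := by
  refine ⟨MvPolynomial.aeval (fun j => Polynomial.C (x j) + Polynomial.C (d j) * Polynomial.X) Q,
    fun t => ?_⟩
  induction Q using MvPolynomial.induction_on with
  | C a => simp
  | add p q hp hq => simp [hp, hq]
  | mul_X p i hp =>
    simp only [map_mul, aeval_X, Polynomial.eval_mul, Polynomial.eval_add, Polynomial.eval_C,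
      Polynomial.eval_X, hp, MvPolynomial.eval_mul, MvPolynomial.eval_X, Pi.add_apply,
      Pi.smul_apply, smul_eq_mul]
    ring

lemma FW.poly_dichotomy (p : Polynomial ℝ)
    (hmono : ∀ s t : ℝ, s ≤ t → p.eval t ≤ p.eval s) :
    (∀ t : ℝ, p.eval t = p.eval 0) ∨ Tendsto (fun t => p.eval t) atTop atBot := by
  rcases eq_or_ne p.natDegree 0 with h0 | h0
  · left
    obtain ⟨c, rfl⟩ := Polynomial.natDegree_eq_zero.mp h0
    intro t; simp
  · right
    have hdeg : 0 < p.degree := Polynomial.natDegree_pos_iff_degree_pos.mp (Nat.pos_of_ne_zero h0)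
    rcases le_or_gt p.leadingCoeff 0 with hlc | hlc
    · exact Polynomial.tendsto_atBot_of_leadingCoeff_nonpos p hdeg hlc
    · exfalso
      have h1 := Polynomial.tendsto_atTop_of_leadingCoeff_nonneg p hdeg hlc.le
      have h2 : ∀ᶠ t : ℝ in atTop, p.eval 0 < p.eval t :=
        h1.eventually (eventually_gt_atTop _)
      obtain ⟨t, ht1, ht2⟩ := (h2.and (eventually_ge_atTop (0:ℝ))).exists
      exact absurd (hmono 0 t ht2) (not_le.mpr ht1)

lemma FW.recession {n : ℕ} (q : (Fin n → ℝ) → ℝ) (hconv : ConvexOn ℝ Set.univ q)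
    (hcont : Continuous q) (Y : ℕ → (Fin n → ℝ)) (d : Fin n → ℝ)
    (hYn : Tendsto (fun j => ‖Y j‖) atTop atTop)
    (hYd : Tendsto (fun j => ‖Y j‖⁻¹ • Y j) atTop (𝓝 d)) (hY1 : ∀ j, q (Y j) ≤ 1)
    (x : Fin n → ℝ) (t : ℝ) (ht : 0 ≤ t) : q (x + t • d) ≤ q x := by
  set lam : ℕ → ℝ := fun j => t * ‖Y j‖⁻¹ with hlam
  have hlam0 : ∀ j, 0 ≤ lam j := fun j => mul_nonneg ht (inv_nonneg.mpr (norm_nonneg _))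
  have hlamT : Tendsto lam atTop (𝓝 0) := by
    have := (tendsto_inv_atTop_zero.comp hYn).const_mul t
    simpa using this
  set z : ℕ → (Fin n → ℝ) := fun j => (1 - lam j) • x + lam j • Y j with hz
  have hzeq : ∀ j, z j = x + t • (‖Y j‖⁻¹ • Y j) - lam j • x := by
    intro j
    simp only [hz, sub_smul, one_smul, hlam, mul_smul]
    abel
  have hzT : Tendsto z atTop (𝓝 (x + t • d)) := by
    rw [funext hzeq]
    have : Tendsto (fun j => x + t • (‖Y j‖⁻¹ • Y j) - lam j • x) atTop
        (𝓝 (x + t • d - (0:ℝ) • x)) :=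
      (tendsto_const_nhds.add (hYd.const_smul t)).sub (hlamT.smul_const x)
    simpa using this
  have hqzT : Tendsto (fun j => q (z j)) atTop (𝓝 (q (x + t • d))) :=
    (hcont.tendsto _).comp hzT
  have hwT : Tendsto (fun j => (1 - lam j) * q x + lam j) atTop (𝓝 (q x)) := by
    have : Tendsto (fun j => (1 - lam j) * q x + lam j) atTop (𝓝 ((1 - 0) * q x + 0)) :=
      ((tendsto_const_nhds.sub hlamT).mul tendsto_const_nhds).add hlamT
    simpa using this
  refine le_of_tendsto_of_tendsto hqzT hwT ?_
  have hev : ∀ᶠ j in atTop, lam j ≤ 1 := hlamT.eventually (eventually_le_nhds one_pos)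
  filter_upwards [hev] with j hj
  calc q (z j) ≤ (1 - lam j) * q x + lam j * q (Y j) :=
        hconv.2 (Set.mem_univ x) (Set.mem_univ (Y j)) (by linarith) (hlam0 j) (by ring)
    _ ≤ (1 - lam j) * q x + lam j := by nlinarith [hY1 j, hlam0 j]


def FW.Inv {n : ℕ} (Q : MvPolynomial (Fin n) ℝ) (d : Fin n → ℝ) : Prop :=
  ∀ (z : Fin n → ℝ) (t : ℝ), MvPolynomial.eval (z + t • d) Q = MvPolynomial.eval z Q

noncomputable def FW.Fv {n : ℕ} (j0 : Fin (n+1)) : Fin (n+1) → MvPolynomial (Fin n) ℝ :=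
  Fin.insertNth j0 0 MvPolynomial.X

lemma FW.eval_reduce {n : ℕ} (j0 : Fin (n+1)) (Qq : MvPolynomial (Fin (n+1)) ℝ)
    (z : Fin n → ℝ) :
    MvPolynomial.eval z (MvPolynomial.aeval (FW.Fv j0) Qq) =
      MvPolynomial.eval (Fin.insertNth j0 (0:ℝ) z) Qq := by
  have step : MvPolynomial.eval z (MvPolynomial.aeval (FW.Fv j0) Qq) =
      MvPolynomial.eval (fun idx => MvPolynomial.eval z (FW.Fv j0 idx)) Qq := by
    induction Qq using MvPolynomial.induction_on with
    | C a => simp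
    | add p q hp hq => simp only [map_add, hp, hq]
    | mul_X p i hp =>
      simp only [map_mul, MvPolynomial.aeval_X, MvPolynomial.eval_mul, MvPolynomial.eval_X, hp]
  rw [step]
  have harg : (fun idx => MvPolynomial.eval z (FW.Fv j0 idx)) = Fin.insertNth j0 (0:ℝ) z := by
    funext idx
    refine Fin.succAboveCases j0 ?_ ?_ idx
    · simp [FW.Fv, Fin.insertNth_apply_same]
    · intro k; simp [FW.Fv, Fin.insertNth_apply_succAbove]
  rw [harg]

lemma FW.insertNth_comb {n : ℕ} (j0 : Fin (n+1)) (a b : ℝ) (z w : Fin n → ℝ) :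
    Fin.insertNth j0 (0:ℝ) ((a • z + b • w : Fin n → ℝ)) =
      a • (Fin.insertNth j0 (0:ℝ) z : Fin (n+1) → ℝ) + b • (Fin.insertNth j0 (0:ℝ) w : Fin (n+1) → ℝ) := by
  funext idx
  refine Fin.succAboveCases j0 ?_ ?_ idx
  · simp [Fin.insertNth_apply_same]
  · intro k; simp [Fin.insertNth_apply_succAbove]

lemma FW.insertNth_proj {n : ℕ} (j0 : Fin (n+1)) (w' : Fin (n+1) → ℝ) (h : w' j0 = 0) :
    Fin.insertNth j0 (0:ℝ) (fun k => w' (j0.succAbove k)) = w' := by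
  funext idx
  refine Fin.succAboveCases j0 ?_ ?_ idx
  · rw [Fin.insertNth_apply_same]; exact h.symm
  · intro k; rw [Fin.insertNth_apply_succAbove]

theorem FW.key : ∀ (n : ℕ) (ι : Type) [Finite ι] (Q : ι → MvPolynomial (Fin n) ℝ),
    (∀ i, ConvexOn ℝ Set.univ fun x => MvPolynomial.eval x (Q i)) →
    (∀ δ : ℝ, 0 < δ → ∃ x, ∀ i, MvPolynomial.eval x (Q i) ≤ δ) →
    ∃ x, ∀ i, MvPolynomial.eval x (Q i) ≤ 0 := by
  intro n
  induction n with
  | zero =>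
    intro ι _ Q hconv hasym
    refine ⟨fun i => i.elim0, fun i => ?_⟩
    by_contra hpos
    push_neg at hpos
    obtain ⟨x, hx⟩ := hasym _ (half_pos hpos)
    have hxe : x = fun i => i.elim0 := funext fun i => i.elim0
    rw [hxe] at hx
    linarith [hx i]
  | succ n ih =>
    intro ι _ Q hconv hasym
    have hcont : ∀ i, Continuous fun x => MvPolynomial.eval x (Q i) := fun i =>
      MvPolynomial.continuous_eval (Q i)
    have hx : ∀ k : ℕ, ∃ x : Fin (n+1) → ℝ, ∀ i, MvPolynomial.eval x (Q i) ≤ 1/((k:ℝ)+1) :=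
      fun k => hasym _ (by positivity)
    choose x hxs using hx
    by_cases hB : ∃ C : ℝ, ∀ k, ‖x k‖ ≤ C
    · -- bounded case
      obtain ⟨C, hC⟩ := hB
      have hmem : ∀ k, x k ∈ Metric.closedBall (0 : Fin (n+1) → ℝ) C := by
        intro k; rw [Metric.mem_closedBall, dist_zero_right]; exact hC k
      obtain ⟨a, -, φ, hφ, hlim⟩ :=
        (isCompact_closedBall (0 : Fin (n+1) → ℝ) C).tendsto_subseq hmem
      refine ⟨a, fun i => ?_⟩
      have h1 : Tendsto (fun k => MvPolynomial.eval (x (φ k)) (Q i)) atTop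
          (𝓝 (MvPolynomial.eval a (Q i))) := ((hcont i).tendsto a).comp hlim
      have h2 : Tendsto (fun k : ℕ => 1/((k:ℝ)+1)) atTop (𝓝 0) :=
        tendsto_one_div_add_atTop_nhds_zero_nat
      refine le_of_tendsto_of_tendsto' h1 h2 (fun k => le_trans (hxs (φ k) i) ?_)
      have hk : (k:ℝ) + 1 ≤ (φ k : ℝ) + 1 := by
        have h3 : k ≤ φ k := hφ.le_apply
        have h4 : (k:ℝ) ≤ (φ k : ℝ) := Nat.cast_le.mpr h3
        linarith
      exact one_div_le_one_div_of_le (by positivity) hk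
    · -- unbounded case
      push_neg at hB
      choose kf hkf using hB
      set y : ℕ → (Fin (n+1) → ℝ) := fun j => x (kf ((j:ℝ)+1)) with hy
      have hy1 : ∀ j i, MvPolynomial.eval (y j) (Q i) ≤ 1 := by
        intro j i
        refine le_trans (hxs _ i) ?_
        rw [div_le_one (by positivity)]; linarith [Nat.cast_nonneg (α := ℝ) (kf ((j:ℝ)+1))]
      have hynorm : ∀ j : ℕ, (j:ℝ) + 1 < ‖y j‖ := fun j => hkf _
      have hyT : Tendsto (fun j => ‖y j‖) atTop atTop := by
        refine tendsto_atTop_mono (fun j => (hynorm j).le) ?_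
        exact tendsto_atTop_add_const_right _ 1 tendsto_natCast_atTop_atTop
      have hu : ∀ j, ‖y j‖⁻¹ • y j ∈ Metric.sphere (0 : Fin (n+1) → ℝ) 1 := by
        intro j
        have h0 : 0 < ‖y j‖ := lt_of_le_of_lt (by positivity) (hynorm j)
        rw [Metric.mem_sphere, dist_zero_right, norm_smul, norm_inv, norm_norm]
        field_simp
      obtain ⟨d, hdmem, φ, hφ, hud⟩ :=
        (isCompact_sphere (0 : Fin (n+1) → ℝ) 1).tendsto_subseq hu
      have hd1 : ‖d‖ = 1 := by rwa [Metric.mem_sphere, dist_zero_right] at hdmem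
      have hd0 : d ≠ 0 := by intro h; rw [h, norm_zero] at hd1; norm_num at hd1
      set Y : ℕ → (Fin (n+1) → ℝ) := fun j => y (φ j) with hY
      have hYn : Tendsto (fun j => ‖Y j‖) atTop atTop := hyT.comp hφ.tendsto_atTop
      have hYd : Tendsto (fun j => ‖Y j‖⁻¹ • Y j) atTop (𝓝 d) := hud
      have hY1 : ∀ j i, MvPolynomial.eval (Y j) (Q i) ≤ 1 := fun j i => hy1 _ i
      -- recession property
      have hR : ∀ (i : ι) (z : Fin (n+1) → ℝ) (t : ℝ), 0 ≤ t →
          MvPolynomial.eval (z + t • d) (Q i) ≤ MvPolynomial.eval z (Q i) := by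
        intro i z t ht
        exact FW.recession _ (hconv i) (hcont i) Y d hYn hYd (fun j => hY1 j i) z t ht
      -- antitone along the line
      have hanti : ∀ (i : ι) (z : Fin (n+1) → ℝ) (s t : ℝ), s ≤ t →
          MvPolynomial.eval (z + t • d) (Q i) ≤ MvPolynomial.eval (z + s • d) (Q i) := by
        intro i z s t hst
        have := hR i (z + s • d) (t - s) (sub_nonneg.mpr hst)
        have heq : z + s • d + (t - s) • d = z + t • d := by module
        rwa [heq] at this
      -- pointwise dichotomy
      have hdich : ∀ (i : ι) (z : Fin (n+1) → ℝ),
          (∀ t : ℝ, MvPolynomial.eval (z + t • d) (Q i) = MvPolynomial.eval z (Q i)) ∨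
          Tendsto (fun t : ℝ => MvPolynomial.eval (z + t • d) (Q i)) atTop atBot := by
        intro i z
        obtain ⟨p, hp⟩ := FW.exists_line_poly (Q i) z d
        have hm : ∀ s t : ℝ, s ≤ t → p.eval t ≤ p.eval s := by
          intro s t hst; rw [hp, hp]; exact hanti i z s t hst
        rcases FW.poly_dichotomy p hm with hc | hT
        · left
          intro t
          have := hc t
          rw [hp, hp] at this
          simpa using this
        · right
          have hfun : (fun t : ℝ => p.eval t) =
              fun t : ℝ => MvPolynomial.eval (z + t • d) (Q i) := funext hp
          rwa [hfun] at hT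
      -- uniform dichotomy
      have huni : ∀ i : ι,
          (∀ (z : Fin (n+1) → ℝ) (t : ℝ),
            MvPolynomial.eval (z + t • d) (Q i) = MvPolynomial.eval z (Q i)) ∨
          (∀ z : Fin (n+1) → ℝ,
            Tendsto (fun t : ℝ => MvPolynomial.eval (z + t • d) (Q i)) atTop atBot) := by
        intro i
        by_cases hni : ∃ z₀ : Fin (n+1) → ℝ,
            Tendsto (fun t : ℝ => MvPolynomial.eval (z₀ + t • d) (Q i)) atTop atBot
        · right
          obtain ⟨z₀, hz₀⟩ := hni
          intro w
          rcases hdich i w with hc | hT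
          · exfalso
            set qi : (Fin (n+1) → ℝ) → ℝ := fun v => MvPolynomial.eval v (Q i) with hqi
            have hmid : ∀ s : ℝ, w + s • d =
                (1/2 : ℝ) • (z₀ + s • d) + (1/2 : ℝ) • (((2:ℝ) • w - z₀) + s • d) := by
              intro s; module
            have hbd : ∀ s : ℝ, 0 ≤ s →
                qi w ≤ (1/2) * qi (z₀ + s • d) + (1/2) * qi (((2:ℝ) • w - z₀)) := by
              intro s hs
              have h1 : qi (w + s • d) ≤
                  (1/2) * qi (z₀ + s • d) + (1/2) * qi (((2:ℝ) • w - z₀) + s • d) := by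
                rw [hmid s]
                exact (hconv i).2 (Set.mem_univ _) (Set.mem_univ _)
                  (by norm_num) (by norm_num) (by norm_num)
              have h2 : qi (((2:ℝ) • w - z₀) + s • d) ≤ qi ((2:ℝ) • w - z₀) := hR i _ s hs
              have h3 : qi (w + s • d) = qi w := hc s
              nlinarith
            have hev : ∀ᶠ s : ℝ in atTop,
                qi (z₀ + s • d) ≤ 2 * qi w - qi ((2:ℝ) • w - z₀) - 1 :=
              hz₀.eventually (eventually_le_atBot _)
            obtain ⟨s, hs1, hs2⟩ := (hev.and (eventually_ge_atTop (0:ℝ))).exists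
            have := hbd s hs2
            linarith
          · exact hT
        · left
          intro z t
          rcases hdich i z with hc | hT
          · exact hc t
          · exact absurd ⟨z, hT⟩ hni
      -- reduction to a hyperplane
      obtain ⟨j0, hj0⟩ : ∃ j0, d j0 ≠ 0 := by
        by_contra hno
        push_neg at hno
        exact hd0 (funext fun j => hno j)
      have hconv' : ∀ i : {i : ι // FW.Inv (Q i) d},
          ConvexOn ℝ Set.univ fun z : Fin n → ℝ =>
            MvPolynomial.eval z (MvPolynomial.aeval (FW.Fv j0) (Q i.1)) := by
        intro i
        refine ⟨convex_univ, ?_⟩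
        intro z _ w _ a b ha hb hab
        simp only [FW.eval_reduce]
        rw [FW.insertNth_comb]
        exact (hconv i.1).2 (Set.mem_univ _) (Set.mem_univ _) ha hb hab
      have hasym' : ∀ δ : ℝ, 0 < δ → ∃ z : Fin n → ℝ,
          ∀ i : {i : ι // FW.Inv (Q i) d},
            MvPolynomial.eval z (MvPolynomial.aeval (FW.Fv j0) (Q i.1)) ≤ δ := by
        intro δ hδ
        obtain ⟨w, hw⟩ := hasym δ hδ
        have hw'j : (w - (w j0 / d j0) • d) j0 = 0 := by
          simp only [Pi.sub_apply, Pi.smul_apply, smul_eq_mul, div_mul_cancel₀ _ hj0, sub_self]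
        refine ⟨fun k => (w - (w j0 / d j0) • d) (j0.succAbove k), fun i => ?_⟩
        rw [FW.eval_reduce, FW.insertNth_proj j0 _ hw'j]
        have heqw : w - (w j0 / d j0) • d = w + (-(w j0 / d j0)) • d := by module
        rw [heqw, i.2 w (-(w j0 / d j0))]
        exact hw i.1
      obtain ⟨z0, hz0⟩ := ih {i : ι // FW.Inv (Q i) d}
        (fun i => MvPolynomial.aeval (FW.Fv j0) (Q i.1)) hconv' hasym'
      have hev : ∀ᶠ t : ℝ in atTop, ∀ i : ι, ¬ FW.Inv (Q i) d →
          MvPolynomial.eval ((Fin.insertNth j0 (0:ℝ) z0 : Fin (n+1) → ℝ) + t • d) (Q i) ≤ 0 := by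
        rw [eventually_all]
        intro i
        by_cases hi : FW.Inv (Q i) d
        · exact Eventually.of_forall fun t h => absurd hi h
        · rcases huni i with hc | hT
          · exact absurd hc hi
          · exact ((hT _).eventually (eventually_le_atBot 0)).mono fun t h _ => h
      obtain ⟨T, hT⟩ := hev.exists
      refine ⟨(Fin.insertNth j0 (0:ℝ) z0 : Fin (n+1) → ℝ) + T • d, fun i => ?_⟩
      by_cases hi : FW.Inv (Q i) d
      · have h1 := hz0 ⟨i, hi⟩
        rw [FW.eval_reduce] at h1
        calc MvPolynomial.eval ((Fin.insertNth j0 (0:ℝ) z0 : Fin (n+1) → ℝ) + T • d) (Q i)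
            = MvPolynomial.eval (Fin.insertNth j0 (0:ℝ) z0) (Q i) := hi _ T
          _ ≤ 0 := h1
      · exact hT i hi


theorem stmt_13 {n m p : ℕ} (P : MvPolynomial (Fin n) ℝ)
    (G : Fin m → MvPolynomial (Fin n) ℝ) (H : Fin p → MvPolynomial (Fin n) ℝ)
    (f₀ : (Fin n → ℝ) → ℝ) (hf₀ : f₀ = fun x => MvPolynomial.eval x P)
    (g : Fin m → (Fin n → ℝ) → ℝ) (hg : ∀ i, g i = fun x => MvPolynomial.eval x (G i))
    (h : Fin p → (Fin n → ℝ) → ℝ) (hh : ∀ j, h j = fun x => MvPolynomial.eval x (H j))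
    (hconvf : ConvexOn ℝ Set.univ f₀)
    (hconvg : ∀ i, ConvexOn ℝ Set.univ (g i)) (hconvh : ∀ j, ConvexOn ℝ Set.univ (h j))
    (Feas : Set (Fin n → ℝ))
    (hFeas : Feas = {x | (∀ i, g i x ≤ 0) ∧ ∀ j, h j x ≤ 0})
    (hFne : Feas.Nonempty)
    (fstar : ℝ) (hfstar : IsGLB (f₀ '' Feas) fstar) :
    ∀ ε : ℝ, 0 < ε → ∃ δ : ℝ, 0 < δ ∧
      ∀ x : Fin n → ℝ, (∀ i, g i x ≤ δ) → (∀ j, h j x ≤ δ) →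
        0 < f₀ x - fstar + ε := by
  intro ε hε
  by_contra hno
  push_neg at hno
  have hno' : ∀ δ : ℝ, 0 < δ → ∃ x : Fin n → ℝ,
      (∀ i, g i x ≤ δ) ∧ (∀ j, h j x ≤ δ) ∧ f₀ x - fstar + ε ≤ 0 := by
    intro δ hδ
    obtain ⟨x, hx1, hx2, hx3⟩ := hno δ hδ
    exact ⟨x, hx1, hx2, hx3⟩
  -- set up the combined system
  set Q : Option (Fin m ⊕ Fin p) → MvPolynomial (Fin n) ℝ := fun o =>
    match o with
    | none => P + MvPolynomial.C (ε - fstar)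
    | some (Sum.inl i) => G i
    | some (Sum.inr j) => H j
    with hQ
  have hevalnone : ∀ x : Fin n → ℝ, MvPolynomial.eval x (Q none) = f₀ x - fstar + ε := by
    intro x; simp [hQ, hf₀]; ring
  have hevalg : ∀ (i : Fin m) (x : Fin n → ℝ),
      MvPolynomial.eval x (Q (some (Sum.inl i))) = g i x := by
    intro i x; simp [hQ, hg i]
  have hevalh : ∀ (j : Fin p) (x : Fin n → ℝ),
      MvPolynomial.eval x (Q (some (Sum.inr j))) = h j x := by
    intro j x; simp [hQ, hh j]
  have hconvQ : ∀ o, ConvexOn ℝ Set.univ fun x => MvPolynomial.eval x (Q o) := by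
    rintro (_ | i | j)
    · have : (fun x => MvPolynomial.eval x (Q none)) = fun x => f₀ x + (ε - fstar) := by
        funext x; rw [hevalnone]; ring
      rw [this]
      exact hconvf.add_const _
    · have : (fun x => MvPolynomial.eval x (Q (some (Sum.inl i)))) = g i := by
        funext x; rw [hevalg]
      rw [this]; exact hconvg i
    · have : (fun x => MvPolynomial.eval x (Q (some (Sum.inr j)))) = h j := by
        funext x; rw [hevalh]
      rw [this]; exact hconvh j
  have hasymQ : ∀ δ : ℝ, 0 < δ → ∃ x : Fin n → ℝ, ∀ o,
      MvPolynomial.eval x (Q o) ≤ δ := by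
    intro δ hδ
    obtain ⟨x, hx1, hx2, hx3⟩ := hno' δ hδ
    refine ⟨x, ?_⟩
    rintro (_ | i | j)
    · rw [hevalnone]; linarith
    · rw [hevalg]; exact hx1 i
    · rw [hevalh]; exact hx2 j
  obtain ⟨x, hx⟩ := FW.key n (Option (Fin m ⊕ Fin p)) Q hconvQ hasymQ
  have hxg : ∀ i, g i x ≤ 0 := fun i => by
    have := hx (some (Sum.inl i)); rwa [hevalg] at this
  have hxh : ∀ j, h j x ≤ 0 := fun j => by
    have := hx (some (Sum.inr j)); rwa [hevalh] at this
  have hxf : f₀ x - fstar + ε ≤ 0 := by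
    have := hx none; rwa [hevalnone] at this
  have hxF : x ∈ Feas := by rw [hFeas]; exact ⟨hxg, hxh⟩
  have : fstar ≤ f₀ x := hfstar.1 ⟨x, hxF, rfl⟩
  linarith
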